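/- For every real t > 0 and every integer n ≥ 2, the polynomial h_n(x;t) in x has only real zeros. -/

import Mathlib

open Polynomial Finset

/-- Speyer's g-polynomial of the uniform matroid `U_{n,d}`, evaluated at `t`. -/
noncomputable def speyerG (n d : ℕ) (t : ℝ) : ℝ :=
  ∑ i ∈ Finset.Icc 1 d,
    ((n - i - 1).choose (d - i) : ℝ) * ((n - d - 1).choose (i - 1) : ℝ) * t ^ i

/-- The generating polynomial `h_n(x;t) = ∑_{d=1}^{n-1} g_{n,d}(t) x^d` (in `x`). -/
noncomputable def hPoly (n : ℕ) (t : ℝ) : Polynomial ℝ :=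
  ∑ d ∈ Finset.Icc 1 (n - 1), Polynomial.C (speyerG n d t) * Polynomial.X ^ d

-- Lemma B: vanishing
lemma speyerG_eq_zero {n d : ℕ} (hn : 2 ≤ n) (hd : n ≤ d) (t : ℝ) : speyerG n d t = 0 := by
  unfold speyerG
  apply Finset.sum_eq_zero
  intro i hi
  simp only [Finset.mem_Icc] at hi
  rcases eq_or_lt_of_le hi.1 with h1 | h1
  · have : n - 1 - 1 < d - 1 := by omega
    have h2 : n - i - 1 = n - 1 - 1 := by omega
    have h3 : d - i = d - 1 := by omega
    rw [h2, h3, Nat.choose_eq_zero_of_lt this]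
    simp
  · have h2 : n - d - 1 = 0 := by omega
    rw [h2, Nat.choose_eq_zero_of_lt (by omega : (0:ℕ) < i - 1)]
    simp

-- top coefficient
lemma speyerG_top {m : ℕ} (hm : 2 ≤ m) (t : ℝ) : speyerG m (m-1) t = t := by
  unfold speyerG
  rw [Finset.sum_eq_single 1]
  · have h1 : m - 1 - 1 = m - 2 := by omega
    have h2 : m - (m-1) - 1 = 0 := by omega
    rw [h1, h2]
    simp [Nat.choose_self]
  · intro i hi hne
    simp only [Finset.mem_Icc] at hi
    have h2 : m - (m-1) - 1 = 0 := by omega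
    rw [h2, Nat.choose_eq_zero_of_lt (by omega : (0:ℕ) < i - 1)]
    simp
  · intro h
    simp only [Finset.mem_Icc] at h
    omega


lemma speyerG_conv (M D : ℕ) (t : ℝ) : speyerG (D + M + 1) D t
    = ∑ j ∈ Finset.range D, ((M + (D-1-j)).choose (D-1-j) : ℝ) * (M.choose j : ℝ) * t^(j+1) := by
  unfold speyerG
  rw [← Finset.Ico_add_one_right_eq_Icc, Finset.sum_Ico_eq_sum_range]
  have hD : D + 1 - 1 = D := by omega
  rw [hD]
  apply Finset.sum_congr rfl
  intro j hj
  rw [Finset.mem_range] at hj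
  have e1 : D + M + 1 - (1 + j) - 1 = M + (D - 1 - j) := by omega
  have e2 : D - (1 + j) = D - 1 - j := by omega
  have e3 : D + M + 1 - D - 1 = M := by omega
  have e4 : 1 + j - 1 = j := by omega
  have e5 : 1 + j = j + 1 := by omega
  rw [e1, e2, e3, e4, e5]


lemma key (m E : ℕ) (t : ℝ) :
    ∑ j ∈ Finset.range (E+2), ((m+1+(E+1-j)).choose (E+1-j) : ℝ) * ((m+1).choose j : ℝ) * t^(j+1)
    = ∑ j ∈ Finset.range (E+2), ((m+(E+1-j)).choose (E+1-j) : ℝ) * (m.choose j : ℝ) * t^(j+1)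
    + ∑ j ∈ Finset.range (E+1), ((m+1+(E-j)).choose (E-j) : ℝ) * ((m+1).choose j : ℝ) * t^(j+1)
    + t * ∑ j ∈ Finset.range (E+1), ((m+(E-j)).choose (E-j) : ℝ) * (m.choose j : ℝ) * t^(j+1) := by
  have h1 : ∑ j ∈ Finset.range (E+2), ((m+1+(E+1-j)).choose (E+1-j) : ℝ) * ((m+1).choose j : ℝ) * t^(j+1)
      = (∑ j ∈ Finset.range (E+1), ((m+1+(E-j)).choose (E-j) : ℝ) * ((m+1).choose j : ℝ) * t^(j+1))
      + (∑ j ∈ Finset.range (E+1), ((m+(E+1-j)).choose (E+1-j) : ℝ) * ((m+1).choose j : ℝ) * t^(j+1))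
      + ((m+1).choose (E+1) : ℝ) * t^(E+2) := by
    rw [Finset.sum_range_succ, ← Finset.sum_add_distrib]
    have htop : E + 1 - (E+1) = 0 := by omega
    rw [htop]
    simp only [Nat.add_zero, Nat.choose_zero_right, Nat.cast_one, one_mul]
    congr 1
    apply Finset.sum_congr rfl
    intro j hj
    rw [Finset.mem_range] at hj
    have e1 : E + 1 - j = (E - j) + 1 := by omega
    have e2 : m + 1 + (E + 1 - j) = (m + (E - j) + 1) + 1 := by omega
    have e3 : m + 1 + (E - j) = m + (E - j) + 1 := by omega
    have e4 : m + (E - j + 1) = m + (E - j) + 1 := by omega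
    rw [e2, e1, e3, e4, Nat.choose_succ_succ']
    push_cast
    ring
  have h3 : ∑ j ∈ Finset.range (E+1), ((m+(E+1-j)).choose (E+1-j) : ℝ) * ((m+1).choose j : ℝ) * t^(j+1)
      = (∑ j ∈ Finset.range E, ((m+(E-j)).choose (E-j) : ℝ) * (m.choose j : ℝ) * t^(j+2))
      + (∑ j ∈ Finset.range E, ((m+(E-j)).choose (E-j) : ℝ) * (m.choose (j+1) : ℝ) * t^(j+2))
      + ((m+(E+1)).choose (E+1) : ℝ) * t := by
    rw [Finset.sum_range_succ', ← Finset.sum_add_distrib]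
    have e0 : E + 1 - 0 = E + 1 := by omega
    rw [e0]
    simp only [Nat.choose_zero_right, Nat.cast_one, mul_one, pow_one]
    congr 1
    · apply Finset.sum_congr rfl
      intro j hj
      rw [Finset.mem_range] at hj
      have e1 : E + 1 - (j + 1) = E - j := by omega
      rw [e1, Nat.choose_succ_succ]
      push_cast
      ring
    · norm_num
  have h4 : ∑ j ∈ Finset.range (E+1), ((m+(E+1-j)).choose (E+1-j) : ℝ) * (m.choose j : ℝ) * t^(j+1)
      = (∑ j ∈ Finset.range E, ((m+(E-j)).choose (E-j) : ℝ) * (m.choose (j+1) : ℝ) * t^(j+2))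
      + ((m+(E+1)).choose (E+1) : ℝ) * t := by
    rw [Finset.sum_range_succ']
    have e0 : E + 1 - 0 = E + 1 := by omega
    rw [e0]
    have hs : ∀ j ∈ Finset.range E,
        ((m+(E+1-(j+1))).choose (E+1-(j+1)) : ℝ) * (m.choose (j+1) : ℝ) * t^(j+1+1)
        = ((m+(E-j)).choose (E-j) : ℝ) * (m.choose (j+1) : ℝ) * t^(j+2) := by
      intro j hj
      have e1 : E + 1 - (j+1) = E - j := by omega
      rw [e1]
    rw [Finset.sum_congr rfl hs]
    norm_num
  have h5 : ∑ j ∈ Finset.range (E+1), ((m+(E-j)).choose (E-j) : ℝ) * (m.choose j : ℝ) * t^(j+1)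
      = (∑ j ∈ Finset.range E, ((m+(E-j)).choose (E-j) : ℝ) * (m.choose j : ℝ) * t^(j+1))
      + (m.choose E : ℝ) * t^(E+1) := by
    rw [Finset.sum_range_succ]
    have e0 : E - E = 0 := by omega
    rw [e0]
    simp
  have h2 : ∑ j ∈ Finset.range (E+2), ((m+(E+1-j)).choose (E+1-j) : ℝ) * (m.choose j : ℝ) * t^(j+1)
      = (∑ j ∈ Finset.range (E+1), ((m+(E+1-j)).choose (E+1-j) : ℝ) * (m.choose j : ℝ) * t^(j+1))
      + (m.choose (E+1) : ℝ) * t^(E+2) := by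
    rw [Finset.sum_range_succ]
    have htop : E + 1 - (E+1) = 0 := by omega
    rw [htop]
    simp
  rw [h1, h3, h2, h4, h5]
  rw [mul_add, Finset.mul_sum]
  have h6 : ∀ j ∈ Finset.range E, t * (((m+(E-j)).choose (E-j) : ℝ) * (m.choose j : ℝ) * t^(j+1))
      = ((m+(E-j)).choose (E-j) : ℝ) * (m.choose j : ℝ) * t^(j+2) := by
    intro j hj; ring
  rw [Finset.sum_congr rfl h6]
  have hp : ((m+1).choose (E+1) : ℝ) = (m.choose E : ℝ) + (m.choose (E+1) : ℝ) := by
    rw [Nat.choose_succ_succ]; push_cast; ring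
  rw [hp]
  ring


lemma speyerG_zero (n : ℕ) (t : ℝ) : speyerG n 0 t = 0 := by simp [speyerG]

lemma speyerG_one (n : ℕ) (t : ℝ) : speyerG n 1 t = t := by
  simp [speyerG]


lemma speyerG_rec {n d : ℕ} (hn : 2 ≤ n) (hd : 1 ≤ d) (t : ℝ) :
    speyerG (n+2) d t = speyerG (n+1) d t + speyerG (n+1) (d-1) t + t * speyerG n (d-1) t := by
  rcases le_or_gt d n with hdn | hdn
  · rcases eq_or_lt_of_le hd with h1 | h1
    · -- d = 1
      rw [← h1]
      simp [speyerG_one, speyerG_zero]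
    · -- 2 ≤ d ≤ n
      obtain ⟨E, rfl⟩ : ∃ E, d = E + 2 := ⟨d - 2, by omega⟩
      obtain ⟨m, rfl⟩ : ∃ m, n = E + 2 + m := ⟨n - (E + 2), by omega⟩
      have c1 : speyerG (E+2+m+2) (E+2) t
          = ∑ j ∈ Finset.range (E+2), (((m+1) + (E+2-1-j)).choose (E+2-1-j) : ℝ) * ((m+1).choose j : ℝ) * t^(j+1) := by
        rw [show E+2+m+2 = (E+2)+(m+1)+1 by omega]
        exact speyerG_conv (m+1) (E+2) t
      have c2 : speyerG (E+2+m+1) (E+2) t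
          = ∑ j ∈ Finset.range (E+2), ((m + (E+2-1-j)).choose (E+2-1-j) : ℝ) * (m.choose j : ℝ) * t^(j+1) := by
        rw [show E+2+m+1 = (E+2)+m+1 by omega]
        exact speyerG_conv m (E+2) t
      have c3 : speyerG (E+2+m+1) (E+1) t
          = ∑ j ∈ Finset.range (E+1), (((m+1) + (E+1-1-j)).choose (E+1-1-j) : ℝ) * ((m+1).choose j : ℝ) * t^(j+1) := by
        rw [show E+2+m+1 = (E+1)+(m+1)+1 by omega]
        exact speyerG_conv (m+1) (E+1) t
      have c4 : speyerG (E+2+m) (E+1) t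
          = ∑ j ∈ Finset.range (E+1), ((m + (E+1-1-j)).choose (E+1-1-j) : ℝ) * (m.choose j : ℝ) * t^(j+1) := by
        rw [show E+2+m = (E+1)+m+1 by omega]
        exact speyerG_conv m (E+1) t
      have hd1 : E + 2 - 1 = E + 1 := rfl
      have hd2 : E + 1 - 1 = E := rfl
      rw [show (E+2) - 1 = E+1 from rfl] -- rewrite d-1 in goal
      rw [c1, c2, c3, c4, hd1, hd2]
      exact key m E t
  · rcases eq_or_lt_of_le (show n + 1 ≤ d from hdn) with h1 | h1
    · -- d = n + 1
      rw [← h1]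
      have e1 : speyerG (n+2) (n+1) t = t := by
        have := speyerG_top (m := n+2) (by omega) t
        simpa using this
      have e2 : speyerG (n+1) n t = t := by
        have := speyerG_top (m := n+1) (by omega) t
        simpa using this
      rw [show (n+1) - 1 = n from rfl, e1, e2,
        speyerG_eq_zero (by omega) (le_refl (n+1)) t,
        speyerG_eq_zero hn (le_refl n) t]
      ring
    · -- d ≥ n + 2
      rw [speyerG_eq_zero (by omega : 2 ≤ n+2) (by omega) t,
        speyerG_eq_zero (by omega : 2 ≤ n+1) (by omega) t,
        speyerG_eq_zero (by omega : 2 ≤ n+1) (by omega) t,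
        speyerG_eq_zero hn (by omega) t]
      ring


lemma aeval_hPoly (n : ℕ) (t : ℝ) (z : ℂ) :
    Polynomial.aeval z (hPoly n t) = ∑ d ∈ Finset.Icc 1 (n-1), (speyerG n d t : ℂ) * z^d := by
  simp [hPoly, map_sum]

lemma shift (N : ℕ) (f : ℕ → ℂ) (hf0 : f 0 = 0) (z : ℂ) :
    ∑ d ∈ Finset.Icc 1 (N+1), f (d-1) * z^d = z * ∑ d ∈ Finset.Icc 1 N, f d * z^d := by
  rw [← Finset.Ico_add_one_right_eq_Icc, Finset.sum_Ico_eq_sum_range,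
      show N + 1 + 1 - 1 = N + 1 by omega]
  rw [← Finset.Ico_add_one_right_eq_Icc (b := N), Finset.sum_Ico_eq_sum_range,
      show N + 1 - 1 = N by omega]
  rw [Finset.sum_range_succ']
  have h1 : ∀ j ∈ Finset.range N, f (1 + (j+1) - 1) * z^(1+(j+1)) = f (1+j) * z^(1+j) * z := by
    intro j hj
    rw [show 1 + (j+1) - 1 = 1 + j by omega]
    ring
  rw [Finset.sum_congr rfl h1]
  rw [show (1:ℕ) + 0 - 1 = 0 by omega, hf0, Finset.mul_sum]
  simp [Finset.sum_mul, mul_comm]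

lemma H_rec (t : ℝ) (z : ℂ) {n : ℕ} (hn : 2 ≤ n) :
    ∑ d ∈ Finset.Icc 1 (n+1), (speyerG (n+2) d t : ℂ) * z^d
    = (1+z) * ∑ d ∈ Finset.Icc 1 n, (speyerG (n+1) d t : ℂ) * z^d
    + (t*z) * ∑ d ∈ Finset.Icc 1 (n-1), (speyerG n d t : ℂ) * z^d := by
  have step1 : ∑ d ∈ Finset.Icc 1 (n+1), (speyerG (n+2) d t : ℂ) * z^d
      = ∑ d ∈ Finset.Icc 1 (n+1), ((speyerG (n+1) d t : ℂ) * z^d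
        + (speyerG (n+1) (d-1) t : ℂ) * z^d + (t:ℂ) * (speyerG n (d-1) t : ℂ) * z^d) := by
    apply Finset.sum_congr rfl
    intro d hd
    rw [Finset.mem_Icc] at hd
    rw [speyerG_rec hn hd.1 t]
    push_cast
    ring
  rw [step1]
  rw [Finset.sum_add_distrib, Finset.sum_add_distrib]
  -- first sum
  have hA : ∑ d ∈ Finset.Icc 1 (n+1), (speyerG (n+1) d t : ℂ) * z^d
      = ∑ d ∈ Finset.Icc 1 n, (speyerG (n+1) d t : ℂ) * z^d := by
    rw [Finset.sum_Icc_succ_top (by omega : 1 ≤ n+1)]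
    rw [speyerG_eq_zero (by omega) (le_refl (n+1)) t]
    simp
  -- second sum
  have hB : ∑ d ∈ Finset.Icc 1 (n+1), (speyerG (n+1) (d-1) t : ℂ) * z^d
      = z * ∑ d ∈ Finset.Icc 1 n, (speyerG (n+1) d t : ℂ) * z^d := by
    exact shift n (fun d => (speyerG (n+1) d t : ℂ)) (by simp [speyerG]) z
  -- third sum
  have hC : ∑ d ∈ Finset.Icc 1 (n+1), (t:ℂ) * (speyerG n (d-1) t : ℂ) * z^d
      = (t*z) * ∑ d ∈ Finset.Icc 1 (n-1), (speyerG n d t : ℂ) * z^d := by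
    have : ∑ d ∈ Finset.Icc 1 (n+1), (t:ℂ) * (speyerG n (d-1) t : ℂ) * z^d
        = (t:ℂ) * ∑ d ∈ Finset.Icc 1 (n+1), (speyerG n (d-1) t : ℂ) * z^d := by
      rw [Finset.mul_sum]
      exact Finset.sum_congr rfl (fun d hd => by ring)
    rw [this, shift n (fun d => (speyerG n d t : ℂ)) (by simp [speyerG]) z]
    have hsplit : ∑ d ∈ Finset.Icc 1 n, (speyerG n d t : ℂ) * z^d
        = ∑ d ∈ Finset.Icc 1 (n-1), (speyerG n d t : ℂ) * z^d := by
      rw [show n = (n-1) + 1 by omega, Finset.sum_Icc_succ_top (by omega : 1 ≤ n-1+1)]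
      rw [show n - 1 + 1 = n by omega]
      rw [speyerG_eq_zero hn (le_refl n) t]
      simp
    rw [hsplit]
    ring
  rw [hA, hB, hC]
  ring


lemma speyerG_3_2 (t : ℝ) : speyerG 3 2 t = t := by
  unfold speyerG
  rw [show Finset.Icc 1 2 = {1, 2} by decide]
  norm_num


lemma H_closed (t : ℝ) (z α β : ℂ) (hs : α + β = 1 + z) (hp : α * β = -((t:ℂ)*z)) :
    ∀ k : ℕ, (α - β) * (∑ d ∈ Finset.Icc 1 (k+1), (speyerG (k+2) d t : ℂ) * z^d)
      = ((t:ℂ)*z) * (α^(k+1) - β^(k+1)) := by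
  intro k
  induction k using Nat.twoStepInduction with
  | zero =>
    rw [Finset.Icc_self, Finset.sum_singleton, speyerG_one]
    push_cast
    ring
  | one =>
    rw [show Finset.Icc 1 2 = {1, 2} by decide]
    rw [Finset.sum_insert (by decide), Finset.sum_singleton, speyerG_one, speyerG_3_2]
    push_cast
    linear_combination (-((t:ℂ)*z*(α-β))) * hs
  | more k ih0 ih1 =>
    have hrec := H_rec t z (n := k+2) (by omega)
    rw [show k+2+2 = k+4 by omega] at hrec
    rw [show k+2-1 = k+1 from rfl] at hrec
    rw [show k+2+1 = k+3 by omega] at hrec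
    rw [hrec, mul_add]
    rw [mul_comm (α - β) ((1+z) * _), mul_assoc, mul_comm (∑ d ∈ Finset.Icc 1 (k+2), _) (α-β)]
    rw [mul_comm (α - β) (((t:ℂ)*z) * _), mul_assoc, mul_comm (∑ d ∈ Finset.Icc 1 (k+1), _) (α-β)]
    rw [show k+3 = (k+1)+2 by omega] at ih1 ⊢
    rw [ih0, ih1]
    linear_combination (-((t:ℂ)*z*(α^(k+1+1)-β^(k+1+1)))) * hs + ((t:ℂ)*z*(α^(k+1)-β^(k+1))) * hp


-- helper: a complex root of a monic real quadratic with positive discriminant is real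
lemma real_quad_root_im {b c : ℝ} (hdisc : 0 < b^2 - 4*c) (w : ℂ)
    (hw : w*w + ((b:ℝ):ℂ)*w + ((c:ℝ):ℂ) = 0) : w.im = 0 := by
  have h1 := congrArg Complex.im hw
  have h2 := congrArg Complex.re hw
  simp [Complex.add_im, Complex.add_re, Complex.mul_im, Complex.mul_re] at h1 h2
  by_contra him
  have h3 : w.im * (2*w.re + b) = 0 := by linear_combination h1
  rcases mul_eq_zero.mp h3 with h4 | h4
  · exact him h4
  · have h5 : w.re = -(b/2) := by linarith
    have h6 : w.re * w.re = (b/2)^2 := by rw [h5]; ring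
    nlinarith [h2, h5, h6, sq_nonneg w.im, hdisc]


theorem hPoly_real_rooted (t : ℝ) (ht : 0 < t) (n : ℕ) (hn : 2 ≤ n) :
    ∀ z : ℂ, Polynomial.aeval z (hPoly n t) = 0 → z.im = 0 := by
  intro z hz
  rw [aeval_hPoly] at hz
  obtain ⟨k, rfl⟩ : ∃ k, n = k + 2 := ⟨n - 2, by omega⟩
  rw [show k+2-1 = k+1 from rfl] at hz
  by_cases hz0 : z = 0
  · subst hz0; simp
  have ht0 : (t:ℂ) ≠ 0 := by exact_mod_cast ne_of_gt ht
  have htz : (t:ℂ) * z ≠ 0 := mul_ne_zero ht0 hz0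
  by_cases hD : (1+z)^2 + 4*(t:ℂ)*z = 0
  · -- degenerate case: z satisfies a real quadratic with positive discriminant
    have hq : z*z + (((2+4*t : ℝ)):ℂ)*z + ((1:ℝ):ℂ) = 0 := by
      push_cast
      linear_combination hD
    have := real_quad_root_im (b := 2+4*t) (c := 1) (by nlinarith) z hq
    exact this
  · obtain ⟨δ, hδ⟩ := IsAlgClosed.exists_pow_nat_eq ((1+z)^2 + 4*(t:ℂ)*z) (n := 2) (by norm_num)
    have hδ0 : δ ≠ 0 := by
      intro h
      apply hD
      rw [← hδ, h]
      ring
    set α : ℂ := (1+z+δ)/2 with hα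
    set β : ℂ := (1+z-δ)/2 with hβ
    have hs : α + β = 1 + z := by rw [hα, hβ]; ring
    have hp : α * β = -((t:ℂ)*z) := by
      rw [hα, hβ]
      linear_combination (-(1:ℂ)/4) * hδ
    have hcf := H_closed t z α β hs hp k
    rw [hz, mul_zero] at hcf
    have hpow : α^(k+1) = β^(k+1) := by
      have := (mul_eq_zero.mp hcf.symm).resolve_left htz
      exact sub_eq_zero.mp this
    have hβ0 : β ≠ 0 := by
      intro h
      rw [h, mul_zero] at hp
      exact htz (by linear_combination hp)
    set ω : ℂ := α / β with hω
    have hω1 : ω^(k+1) = 1 := by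
      rw [hω, div_pow, hpow, div_self (pow_ne_zero _ hβ0)]
    have habs : ‖ω‖ = 1 := by
      have hap : (‖ω‖)^(k+1) = 1 := by
        rw [← norm_pow, hω1, norm_one]
      rcases lt_trichotomy (‖ω‖) 1 with h | h | h
      · exfalso
        have := pow_lt_one₀ (norm_nonneg ω) h (Nat.succ_ne_zero k)
        rw [hap] at this; exact lt_irrefl 1 this
      · exact h
      · exfalso
        have := one_lt_pow₀ h (Nat.succ_ne_zero k)
        rw [hap] at this; exact lt_irrefl 1 this
    set ψ : ℝ := ω.arg / 2 with hψ
    set ε : ℂ := Complex.exp ((ψ:ℂ) * Complex.I) with hε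
    have hε2 : ε^2 = ω := by
      rw [hε, ← Complex.exp_nat_mul]
      rw [show (2:ℕ) * ((ψ:ℂ) * Complex.I) = (ω.arg :ℂ) * Complex.I by
        rw [hψ]; push_cast; ring]
      conv_rhs => rw [← Complex.norm_mul_exp_arg_mul_I ω, habs]
      simp
    have hinv : ε * Complex.exp (-(ψ:ℂ) * Complex.I) = 1 := by
      rw [hε, ← Complex.exp_add]
      rw [show (ψ:ℂ) * Complex.I + -(ψ:ℂ) * Complex.I = 0 by ring, Complex.exp_zero]
    have hsum : ε + Complex.exp (-(ψ:ℂ) * Complex.I) = 2 * ((Real.cos ψ : ℝ):ℂ) := by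
      rw [hε, Complex.ofReal_cos, Complex.two_cos]
    have hαω : α = ω * β := by rw [hω, div_mul_cancel₀ _ hβ0]
    have hs2 : ω * β + β = 1 + z := by rw [← hαω]; exact hs
    have hp2 : ω * β * β = -((t:ℂ)*z) := by rw [← hαω]; exact hp
    have hE : ω*β^2 + (t:ℂ)*(1+ω)*β - (t:ℂ) = 0 := by
      linear_combination (t:ℂ)*hs2 + hp2
    set γ : ℂ := ε * β with hγ
    set c : ℝ := Real.cos ψ with hc
    have hγq : γ*γ + (((2*t*c : ℝ)):ℂ)*γ + ((-t : ℝ):ℂ) = 0 := by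
      push_cast
      rw [hγ]
      linear_combination hE + (β^2 + (t:ℂ)*β)*hε2 - ((t:ℂ)*β*ε)*hsum + (t:ℂ)*β*hinv
    have hγim : γ.im = 0 := by
      apply real_quad_root_im (b := 2*t*c) (c := -t) _ γ hγq
      nlinarith [sq_nonneg (t*c), ht]
    -- z = -γ²/t is real
    have hz2 : (t:ℂ) * z = -(γ*γ) := by
      rw [hγ]
      linear_combination (β^2)*hε2 + hp2
    have him := congrArg Complex.im hz2
    simp [Complex.mul_im, Complex.neg_im, hγim] at him
    rcases him with h | h
    · exact absurd (Complex.ofReal_eq_zero.mp (by exact_mod_cast h : ((t:ℝ):ℂ) = 0) ) (ne_of_gt ht)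
    · exact h
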